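/- With notation as in the von Neumann simplex projection, the output x* with x*_i = max(z_i − τ, 0) is the unique Euclidean projection of z onto the probability simplex, i.e., x* = argmin_{x ∈ Δ^K} ‖x − z‖². -/

import Mathlib

/-- The output of the von Neumann thresholding is the unique Euclidean
projection of `z` onto the probability simplex. -/
theorem stmt_4 {K : ℕ} (hK : 1 ≤ K) (z u : Fin K → ℝ)
    (σ : Equiv.Perm (Fin K)) (hu : u = z ∘ σ)
    (hsort : ∀ i j : Fin K, i ≤ j → u j ≤ u i)
    (ρ : Fin K)
    (hρ : u ρ - ((ρ : ℕ) + 1 : ℝ)⁻¹ * (∑ j ∈ Finset.Iic ρ, u j - 1) > 0)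
    (hρmax : ∀ j : Fin K, ρ < j →
      ¬ (u j - ((j : ℕ) + 1 : ℝ)⁻¹ * (∑ i ∈ Finset.Iic j, u i - 1) > 0))
    (τ : ℝ) (hτ : τ = ((ρ : ℕ) + 1 : ℝ)⁻¹ * (∑ j ∈ Finset.Iic ρ, u j - 1)) :
    (∀ x : Fin K → ℝ, (∀ i, 0 ≤ x i) → ∑ i, x i = 1 →
      ∑ i, (max (z i - τ) 0 - z i) ^ 2 ≤ ∑ i, (x i - z i) ^ 2) ∧
    (∀ x : Fin K → ℝ, (∀ i, 0 ≤ x i) → ∑ i, x i = 1 →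
      ∑ i, (x i - z i) ^ 2 = ∑ i, (max (z i - τ) 0 - z i) ^ 2 →
      x = fun i => max (z i - τ) 0) := by
  -- τ < u ρ
  have hρpos : (0 : ℝ) < (ρ : ℕ) + 1 := by positivity
  have hτρ : ((ρ : ℕ) + 1 : ℝ) * τ = ∑ j ∈ Finset.Iic ρ, u j - 1 := by
    rw [hτ]; field_simp
  have hτlt : τ < u ρ := by
    rw [hτ]; linarith [hρ]
  -- key induction: for ρ ≤ j, the running threshold stays below τ, and u j ≤ τ past ρ
  have key : ∀ n : ℕ, ∀ j : Fin K, j.val = n → ρ ≤ j →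
      ((∑ i ∈ Finset.Iic j, u i) - 1 ≤ ((j : ℕ) + 1) * τ ∧ (ρ < j → u j ≤ τ)) := by
    intro n
    induction n with
    | zero =>
      intro j hj hρj
      have hjρ : j = ρ := le_antisymm (by
        have : j.val ≤ ρ.val := by omega
        exact this) hρj
      subst hjρ
      constructor
      · rw [hτρ]
      · intro h; exact absurd h (lt_irrefl _)
    | succ n ih =>
      intro j hj hρj
      rcases eq_or_lt_of_le hρj with h | h
      · subst h
        constructor
        · rw [hτρ]
        · intro h; exact absurd h (lt_irrefl _)
      · -- ρ < j, j.val = n+1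
        have hjK : n < K := by have := j.isLt; omega
        set j' : Fin K := ⟨n, hjK⟩ with hj'
        have hρj' : ρ ≤ j' := by
          have : ρ.val < j.val := h
          have : ρ.val ≤ n := by omega
          exact this
        have ihj' := (ih j' rfl hρj').1
        -- split the sum
        have hIio : Finset.Iio j = Finset.Iic j' := by
          ext i
          simp only [Finset.mem_Iio, Finset.mem_Iic, Fin.lt_def, Fin.le_def, hj, hj', Fin.val_mk]
          omega
        have hsplit : ∑ i ∈ Finset.Iic j, u i = ∑ i ∈ Finset.Iic j', u i + u j := by
          rw [← Finset.Iio_insert, Finset.sum_insert (by simp), hIio]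
          ring
        -- from hρmax
        have hjpos : (0 : ℝ) < (j : ℕ) + 1 := by positivity
        have hmax := hρmax j h
        push_neg at hmax
        have hmax' : u j ≤ ((j : ℕ) + 1 : ℝ)⁻¹ * (∑ i ∈ Finset.Iic j, u i - 1) := by
          linarith
        have hmul : ((j : ℕ) + 1 : ℝ) * u j ≤ ∑ i ∈ Finset.Iic j, u i - 1 := by
          calc ((j : ℕ) + 1 : ℝ) * u j ≤ ((j : ℕ) + 1 : ℝ) *
              (((j : ℕ) + 1 : ℝ)⁻¹ * (∑ i ∈ Finset.Iic j, u i - 1)) :=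
            mul_le_mul_of_nonneg_left hmax' (le_of_lt hjpos)
            _ = ∑ i ∈ Finset.Iic j, u i - 1 := by field_simp
        have hjval : ((j : ℕ) : ℝ) = (n : ℝ) + 1 := by rw [hj]; push_cast; ring
        have hj'val : ((j' : ℕ) : ℝ) = (n : ℝ) := by simp [hj']
        rw [hj'val] at ihj'
        rw [hsplit, hjval] at hmul ⊢
        -- (n+2) u j ≤ S' - 1 + u j, so (n+1) u j ≤ S' - 1 ≤ (n+1) τ
        have hn1 : (0 : ℝ) < (n : ℝ) + 1 := by positivity
        have hujτ : u j ≤ τ := by nlinarith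
        constructor
        · nlinarith
        · intro _; exact hujτ
  have hgt : ∀ j : Fin K, ρ < j → u j ≤ τ := fun j h =>
    (key j.val j rfl (le_of_lt h)).2 h
  -- sum of thresholded u equals 1
  have husum : ∑ j, max (u j - τ) 0 = 1 := by
    rw [← Finset.sum_add_sum_compl (Finset.Iic ρ)]
    have h1 : ∑ j ∈ Finset.Iic ρ, max (u j - τ) 0 = ∑ j ∈ Finset.Iic ρ, (u j - τ) := by
      apply Finset.sum_congr rfl
      intro j hj
      have hjρ : j ≤ ρ := Finset.mem_Iic.mp hj
      have : τ < u j := lt_of_lt_of_le hτlt (hsort j ρ hjρ)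
      rw [max_eq_left (by linarith)]
    have h2 : ∑ j ∈ (Finset.Iic ρ)ᶜ, max (u j - τ) 0 = 0 := by
      apply Finset.sum_eq_zero
      intro j hj
      have : ρ < j := by
        simp only [Finset.mem_compl, Finset.mem_Iic, not_le] at hj
        exact hj
      rw [max_eq_right (by linarith [hgt j this])]
    rw [h1, h2, Finset.sum_sub_distrib, Finset.sum_const, Fin.card_Iic]
    have : ((ρ.val + 1 : ℕ) : ℝ) = ((ρ : ℕ) : ℝ) + 1 := by push_cast; ring
    rw [nsmul_eq_mul, this]
    linarith [hτρ]
  -- transfer to z via permutation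
  have hzsum : ∑ i, max (z i - τ) 0 = 1 := by
    rw [← Equiv.sum_comp σ (fun i => max (z i - τ) 0)]
    have : ∀ j, max (z (σ j) - τ) 0 = max (u j - τ) 0 := by
      intro j; rw [hu]; rfl
    simp only [this]; exact husum
  -- key algebraic facts
  have hmz : ∀ i, max (z i - τ) 0 - z i = -(min (z i) τ) := by
    intro i
    rcases le_or_gt (z i) τ with h | h
    · rw [max_eq_right (by linarith), min_eq_left h]; ring
    · rw [max_eq_left (by linarith), min_eq_right (le_of_lt h)]; ring
  -- inner product inequality
  have hinner : ∀ x : Fin K → ℝ, (∀ i, 0 ≤ x i) → ∑ i, x i = 1 →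
      ∑ i, (x i - max (z i - τ) 0) * min (z i) τ ≤ 0 := by
    intro x hx hxs
    have h1 : ∑ i, x i * min (z i) τ ≤ τ := by
      calc ∑ i, x i * min (z i) τ ≤ ∑ i, x i * τ := by
            apply Finset.sum_le_sum
            intro i _
            exact mul_le_mul_of_nonneg_left (min_le_right _ _) (hx i)
        _ = (∑ i, x i) * τ := by rw [Finset.sum_mul]
        _ = τ := by rw [hxs]; ring
    have h2 : ∑ i, max (z i - τ) 0 * min (z i) τ = τ := by
      have : ∀ i, max (z i - τ) 0 * min (z i) τ = max (z i - τ) 0 * τ := by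
        intro i
        rcases le_or_gt (z i) τ with h | h
        · rw [max_eq_right (by linarith)]; ring
        · rw [min_eq_right (le_of_lt h)]
      calc ∑ i, max (z i - τ) 0 * min (z i) τ = ∑ i, max (z i - τ) 0 * τ := by
            simp only [this]
        _ = (∑ i, max (z i - τ) 0) * τ := by rw [Finset.sum_mul]
        _ = τ := by rw [hzsum]; ring
    have : ∑ i, (x i - max (z i - τ) 0) * min (z i) τ
        = ∑ i, x i * min (z i) τ - ∑ i, max (z i - τ) 0 * min (z i) τ := by
      rw [← Finset.sum_sub_distrib]
      apply Finset.sum_congr rfl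
      intro i _; ring
    rw [this, h2]; linarith
  -- decomposition identity
  have hid : ∀ x : Fin K → ℝ, ∑ i, (x i - z i) ^ 2
      = ∑ i, (x i - max (z i - τ) 0) ^ 2 + ∑ i, (max (z i - τ) 0 - z i) ^ 2
        - 2 * ∑ i, (x i - max (z i - τ) 0) * min (z i) τ := by
    intro x
    rw [← Finset.sum_add_distrib, Finset.mul_sum, ← Finset.sum_sub_distrib]
    apply Finset.sum_congr rfl
    intro i _
    have h' : z i ⊓ τ = z i - max (z i - τ) 0 := by linarith [hmz i]
    rw [h']; ring
  constructor
  · intro x hx hxs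
    have h1 := hinner x hx hxs
    have h2 := hid x
    have h3 : (0 : ℝ) ≤ ∑ i, (x i - max (z i - τ) 0) ^ 2 :=
      Finset.sum_nonneg fun i _ => sq_nonneg _
    linarith
  · intro x hx hxs heq
    have h1 := hinner x hx hxs
    have h2 := hid x
    have h3 : (0 : ℝ) ≤ ∑ i, (x i - max (z i - τ) 0) ^ 2 :=
      Finset.sum_nonneg fun i _ => sq_nonneg _
    have h4 : ∑ i, (x i - max (z i - τ) 0) ^ 2 = 0 := by linarith
    funext i
    have := (Finset.sum_eq_zero_iff_of_nonneg
      (fun i _ => sq_nonneg (x i - max (z i - τ) 0))).mp h4 i (Finset.mem_univ i)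
    have : x i - max (z i - τ) 0 = 0 := by
      exact pow_eq_zero_iff (by norm_num) |>.mp this
    linarith
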